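/- Let 0 < ε < 1, and in ℝ[x_1, x_2, x_3] let f = (x_3 − x_1² x_2)² − 1 + ε, h_1 = 1 − x_1², h_2 = x_2, h_3 = x_3 − x_2 − 1 (with no equality constraints, s = 0, t = 3). Then f does not belong to the linear cone M_KKT ⊆ ℝ[x_1, x_2, x_3, ν_1, ν_2, ν_3], even though f is strictly positive on V^ℝ_KKT ∩ H and I_KKT is radical. That is, there exist no SOS polynomials σ_0, σ_1, σ_2, σ_3 and polynomials φ_1, …, φ_6 in ℝ[x, ν] with f = σ_0 + σ_1 h_1 + σ_2 h_2 + σ_3 h_3 + φ_1 F_1 + φ_2 F_2 + φ_3 F_3 + φ_4 ν_1 h_1 + φ_5 ν_2 h_2 + φ_6 ν_3 h_3. -/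

import Mathlib

open MvPolynomial

noncomputable section

/-- Variables `x_1, x_2, x_3, ν_1, ν_2, ν_3`. -/
abbrev EVar := Sum (Fin 3) (Fin 3)

/-- The polynomial ring `ℝ[x, ν]`. -/
abbrev EPoly := MvPolynomial EVar ℝ

/-- A real polynomial is SOS if it is a finite sum of squares of real polynomials. -/
def IsSOS {σ : Type*} (p : MvPolynomial σ ℝ) : Prop :=
  ∃ (m : ℕ) (q : Fin m → MvPolynomial σ ℝ), p = ∑ i, (q i) ^ 2

/-- The constraints `h_1 = 1 − x_1², h_2 = x_2, h_3 = x_3 − x_2 − 1`. -/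
def eh : Fin 3 → MvPolynomial (Fin 3) ℝ :=
  ![1 - X 0 ^ 2, X 1, X 2 - X 1 - 1]

/-- The objective `f = (x_3 − x_1² x_2)² − 1 + ε`. -/
def ef (ε : ℝ) : MvPolynomial (Fin 3) ℝ :=
  (X 2 - X 0 ^ 2 * X 1) ^ 2 - 1 + C ε

/-- Lift a polynomial in `ℝ[x]` to `ℝ[x, ν]`. -/
def eliftX (p : MvPolynomial (Fin 3) ℝ) : EPoly := rename Sum.inl p

/-- The variable `ν_j`. -/
def enu (j : Fin 3) : EPoly := X (Sum.inr j)

/-- `F_k = ∂f/∂x_k − Σ_j ν_j ∂h_j/∂x_k`. -/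
def eF (ε : ℝ) (k : Fin 3) : EPoly :=
  eliftX (pderiv k (ef ε)) - ∑ j, enu j * eliftX (pderiv k (eh j))

/-- The KKT ideal `I_KKT = ⟨F_1, F_2, F_3, ν_1 h_1, ν_2 h_2, ν_3 h_3⟩ ⊆ ℝ[x, ν]`. -/
def eI (ε : ℝ) : Ideal EPoly :=
  Ideal.span (Set.range (eF ε) ∪ Set.range (fun j => enu j * eliftX (eh j)))

/-- The linear cone `M_KKT = {σ_0 + Σ_j σ_j h_j : σ_i SOS} + I_KKT`. -/
def eM (ε : ℝ) : Set EPoly :=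
  {p | ∃ (σ0 : EPoly) (σ : Fin 3 → EPoly),
    IsSOS σ0 ∧ (∀ j, IsSOS (σ j)) ∧
    ∃ q ∈ eI ε, p = σ0 + (∑ j, σ j * eliftX (eh j)) + q}

namespace S9

abbrev R2 := Polynomial (Polynomial ℝ)

def evA (x y : ℝ) : R2 →+* ℝ :=
  Polynomial.eval₂RingHom (Polynomial.evalRingHom x) y

def Nn (P : R2) : Prop := ∀ x y : ℝ, 0 ≤ evA x y P

lemma evA_apply (x y : ℝ) (P : R2) :
    evA x y P = (P.map (Polynomial.evalRingHom x)).eval y := by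
  simp [evA, Polynomial.eval₂_eq_eval_map]

lemma lc_nonneg (p : Polynomial ℝ) (h : ∀ y, 0 ≤ p.eval y) : 0 ≤ p.leadingCoeff := by
  by_cases hd : p.natDegree = 0
  · rw [Polynomial.leadingCoeff, hd, Polynomial.coeff_zero_eq_eval_zero]
    exact h 0
  · by_contra hneg
    push_neg at hneg
    have hdeg : 0 < p.degree := Polynomial.natDegree_pos_iff_degree_pos.1 (Nat.pos_of_ne_zero hd)
    have ht := Polynomial.tendsto_atBot_of_leadingCoeff_nonpos p hdeg hneg.le
    obtain ⟨x, hx⟩ := (ht.eventually (Filter.eventually_lt_atBot (0:ℝ))).exists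
    exact absurd (h x) (not_le.2 hx)

lemma natDegree_even (p : Polynomial ℝ) (hp : p ≠ 0) (h : ∀ y, 0 ≤ p.eval y) :
    Even p.natDegree := by
  set q := p.comp (-Polynomial.X) with hqdef
  have hq : ∀ y, 0 ≤ q.eval y := fun y => by
    simpa [hqdef] using h (-y)
  have hlcq : q.leadingCoeff = p.leadingCoeff * (-1) ^ p.natDegree := by
    rw [hqdef, Polynomial.leadingCoeff_comp (by simp : (-Polynomial.X : Polynomial ℝ).natDegree ≠ 0)]
    simp
  have h1 := lc_nonneg p h
  have h2 := lc_nonneg q hq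
  rcases Nat.even_or_odd p.natDegree with he | ho
  · exact he
  · exfalso
    rw [hlcq, ho.neg_one_pow, mul_neg_one, neg_nonneg] at h2
    have hz : p.leadingCoeff = 0 := le_antisymm h2 h1
    exact hp (Polynomial.leadingCoeff_eq_zero.1 hz)

lemma coeff_eval_nonneg (P : R2) (hP : Nn P) (n : ℕ) (hn : P.natDegree ≤ n) (x : ℝ) :
    0 ≤ (P.coeff n).eval x := by
  set q := P.map (Polynomial.evalRingHom x) with hq
  have hqe : ∀ y, 0 ≤ q.eval y := fun y => by
    have := hP x y; rwa [evA_apply] at this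
  have hc : q.coeff n = (P.coeff n).eval x := by simp [hq, Polynomial.coeff_map]
  rcases eq_or_ne (q.coeff n) 0 with h0 | h0
  · rw [← hc, h0]
  · have hdq : q.natDegree = n :=
      le_antisymm (le_trans Polynomial.natDegree_map_le hn)
        (Polynomial.le_natDegree_of_ne_zero h0)
    have hlc := lc_nonneg q hqe
    rwa [Polynomial.leadingCoeff, hdq, hc] at hlc

lemma natDegree_even_b (P : R2) (hP : Nn P) (h0 : P ≠ 0) : Even P.natDegree := by
  have hlc : P.leadingCoeff ≠ 0 := Polynomial.leadingCoeff_ne_zero.2 h0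
  obtain ⟨x, hx⟩ : ∃ x, (P.leadingCoeff).eval x ≠ 0 := by
    by_contra hall; push_neg at hall
    exact hlc (Polynomial.zero_of_eval_zero _ hall)
  set q := P.map (Polynomial.evalRingHom x) with hq
  have hqe : ∀ y, 0 ≤ q.eval y := fun y => by
    have := hP x y; rwa [evA_apply] at this
  have hcq : q.coeff P.natDegree = (P.leadingCoeff).eval x := by
    rw [hq, Polynomial.coeff_map]; rfl
  have hne : q.coeff P.natDegree ≠ 0 := by rw [hcq]; exact hx
  have hq0 : q ≠ 0 := fun h => hne (by simp [h])
  have hdq : q.natDegree = P.natDegree :=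
    le_antisymm Polynomial.natDegree_map_le (Polynomial.le_natDegree_of_ne_zero hne)
  rw [← hdq]
  exact natDegree_even q hq0 hqe

lemma zero_on_Ioo (a b : ℝ) (hab : a < b) (c : Polynomial ℝ)
    (h : ∀ x ∈ Set.Ioo a b, c.eval x = 0) : c = 0 :=
  Polynomial.eq_zero_of_infinite_isRoot c ((Set.Ioo_infinite hab).mono h)

lemma evA_C (x y : ℝ) (c : Polynomial ℝ) : evA x y (Polynomial.C c) = c.eval x := by
  simp [evA]
lemma evA_X (x y : ℝ) : evA x y (Polynomial.X) = y := by simp [evA]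

lemma key (r : ℝ) (hr : r < 0) (P0 P1 P2 P3 : R2)
    (n0 : Nn P0) (n1 : Nn P1) (n2 : Nn P2) (n3 : Nn P3)
    (heq : P0 + P1 * Polynomial.C (1 - Polynomial.X ^ 2) + P2 * Polynomial.X
        + P3 * (Polynomial.C (Polynomial.X ^ 2 - 1) * Polynomial.X - 1)
        = Polynomial.C (Polynomial.C r)) : False := by
  by_cases hz : P2 = 0 ∧ P3 = 0
  · obtain ⟨h2z, h3z⟩ := hz
    have h := congrArg (evA 0 0) heq
    simp only [h2z, h3z, map_add, map_mul, map_sub, map_one, zero_mul, map_zero,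
      evA_C, evA_X, mul_zero, add_zero, sub_zero] at h
    simp only [Polynomial.eval_sub, Polynomial.eval_pow, Polynomial.eval_one,
      Polynomial.eval_X, Polynomial.eval_C] at h
    have g0 := n0 0 0
    have g1 := n1 0 0
    nlinarith
  · -- coefficient argument
    set M := max (max P0.natDegree P1.natDegree) (max (P2.natDegree+1) (P3.natDegree+1))
      with hM
    obtain ⟨m, hm⟩ : ∃ m, M = m + 1 := ⟨M - 1, by omega⟩
    have hd0 : P0.natDegree ≤ m + 1 := by omega
    have hd1 : P1.natDegree ≤ m + 1 := by omega
    have hd2 : P2.natDegree ≤ m := by omega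
    have hd3 : P3.natDegree ≤ m := by omega
    -- rearranged identity
    have heq' : P0 + P1 * Polynomial.C (1 - Polynomial.X ^ 2) + P2 * Polynomial.X
        + ((P3 * Polynomial.C (Polynomial.X ^ 2 - 1)) * Polynomial.X - P3)
        = Polynomial.C (Polynomial.C r) := by rw [← heq]; ring
    have hco := congrArg (fun p : R2 => p.coeff (m+1)) heq'
    simp only [Polynomial.coeff_add, Polynomial.coeff_sub, Polynomial.coeff_mul_C,
      Polynomial.coeff_mul_X, Polynomial.coeff_C, Nat.add_eq_zero, and_false,
      if_false, Nat.succ_ne_zero] at hco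
    -- hco : P0.coeff (m+1) + P1.coeff (m+1) * (1-X^2) + P2.coeff m
    --        + (P3.coeff m * (X^2-1) - P3.coeff (m+1)) = 0
    have hc3' : P3.coeff (m+1) = 0 :=
      Polynomial.coeff_eq_zero_of_natDegree_lt (by omega)
    rcases Nat.even_or_odd (m+1) with hpar | hpar
    · -- M even: kill P2, P3 coeffs at m, conclude on P0, P1
      obtain ⟨s, hs⟩ := hpar
      have st2 : P2.natDegree + 1 < m + 1 := by
        rcases eq_or_ne P2 0 with rfl | h
        · simp only [Polynomial.natDegree_zero]; omega
        · obtain ⟨t, ht⟩ := natDegree_even_b P2 n2 h; omega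
      have st3 : P3.natDegree + 1 < m + 1 := by
        rcases eq_or_ne P3 0 with rfl | h
        · simp only [Polynomial.natDegree_zero]; omega
        · obtain ⟨t, ht⟩ := natDegree_even_b P3 n3 h; omega
      have hc2 : P2.coeff m = 0 := Polynomial.coeff_eq_zero_of_natDegree_lt (by omega)
      have hc3 : P3.coeff m = 0 := Polynomial.coeff_eq_zero_of_natDegree_lt (by omega)
      rw [hc2, hc3, hc3'] at hco
      simp only [zero_mul, sub_zero, add_zero] at hco
      -- hco : P0.coeff (m+1) + P1.coeff (m+1) * (1 - X^2) = 0
      have hzero : ∀ x ∈ Set.Ioo (0:ℝ) 1,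
          (P0.coeff (m+1)).eval x = 0 ∧ (P1.coeff (m+1)).eval x = 0 := by
        intro x hx
        have e := congrArg (Polynomial.eval x) hco
        simp only [Polynomial.eval_add, Polynomial.eval_mul, Polynomial.eval_sub,
          Polynomial.eval_pow, Polynomial.eval_one, Polynomial.eval_X,
          Polynomial.eval_zero] at e
        have g0 := coeff_eval_nonneg P0 n0 (m+1) hd0 x
        have g1 := coeff_eval_nonneg P1 n1 (m+1) hd1 x
        have hpos : (0:ℝ) < 1 - x^2 := by nlinarith [hx.1, hx.2]
        have hprod : 0 ≤ Polynomial.eval x (P1.coeff (m+1)) * (1 - x^2) :=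
          mul_nonneg g1 hpos.le
        have hB : Polynomial.eval x (P1.coeff (m+1)) = 0 := by
          rcases mul_eq_zero.1
            (by linarith : Polynomial.eval x (P1.coeff (m+1)) * (1 - x^2) = 0) with h | h
          · exact h
          · linarith
        exact ⟨by linarith, hB⟩
      have hP0c : P0.coeff (m+1) = 0 :=
        zero_on_Ioo 0 1 one_pos _ (fun x hx => (hzero x hx).1)
      have hP1c : P1.coeff (m+1) = 0 :=
        zero_on_Ioo 0 1 one_pos _ (fun x hx => (hzero x hx).2)
      have st0 : P0.natDegree < m + 1 := by
        rcases eq_or_ne P0 0 with rfl | h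
        · simp only [Polynomial.natDegree_zero]; omega
        · rcases lt_or_eq_of_le hd0 with h' | h'
          · exact h'
          · exfalso
            apply h
            apply Polynomial.leadingCoeff_eq_zero.1
            rw [Polynomial.leadingCoeff, h', hP0c]
      have st1 : P1.natDegree < m + 1 := by
        rcases eq_or_ne P1 0 with rfl | h
        · simp only [Polynomial.natDegree_zero]; omega
        · rcases lt_or_eq_of_le hd1 with h' | h'
          · exact h'
          · exfalso
            apply h
            apply Polynomial.leadingCoeff_eq_zero.1
            rw [Polynomial.leadingCoeff, h', hP1c]
      omega
    · -- M odd : kill P0, P1 coeffs, conclude on P2, P3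
      obtain ⟨s, hs⟩ := hpar
      have st0 : P0.natDegree < m + 1 := by
        rcases eq_or_ne P0 0 with rfl | h
        · simp only [Polynomial.natDegree_zero]; omega
        · obtain ⟨t, ht⟩ := natDegree_even_b P0 n0 h; omega
      have st1 : P1.natDegree < m + 1 := by
        rcases eq_or_ne P1 0 with rfl | h
        · simp only [Polynomial.natDegree_zero]; omega
        · obtain ⟨t, ht⟩ := natDegree_even_b P1 n1 h; omega
      have hc0 : P0.coeff (m+1) = 0 := Polynomial.coeff_eq_zero_of_natDegree_lt st0
      have hc1 : P1.coeff (m+1) = 0 := Polynomial.coeff_eq_zero_of_natDegree_lt st1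
      rw [hc0, hc1, hc3'] at hco
      simp only [zero_mul, zero_add, sub_zero] at hco
      -- hco : P2.coeff m + P3.coeff m * (X^2 - 1) = 0
      have hzero : ∀ x ∈ Set.Ioo (1:ℝ) 2,
          (P2.coeff m).eval x = 0 ∧ (P3.coeff m).eval x = 0 := by
        intro x hx
        have e := congrArg (Polynomial.eval x) hco
        simp only [Polynomial.eval_add, Polynomial.eval_mul, Polynomial.eval_sub,
          Polynomial.eval_pow, Polynomial.eval_one, Polynomial.eval_X,
          Polynomial.eval_zero] at e
        have g2 := coeff_eval_nonneg P2 n2 m hd2 x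
        have g3 := coeff_eval_nonneg P3 n3 m hd3 x
        have hpos : (0:ℝ) < x^2 - 1 := by nlinarith [hx.1, hx.2]
        have hprod : 0 ≤ Polynomial.eval x (P3.coeff m) * (x^2 - 1) :=
          mul_nonneg g3 hpos.le
        have hB : Polynomial.eval x (P3.coeff m) = 0 := by
          rcases mul_eq_zero.1
            (by linarith : Polynomial.eval x (P3.coeff m) * (x^2 - 1) = 0) with h | h
          · exact h
          · linarith
        exact ⟨by linarith, hB⟩
      have hP2c : P2.coeff m = 0 :=
        zero_on_Ioo 1 2 one_lt_two _ (fun x hx => (hzero x hx).1)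
      have hP3c : P3.coeff m = 0 :=
        zero_on_Ioo 1 2 one_lt_two _ (fun x hx => (hzero x hx).2)
      have st2 : P2 = 0 ∨ P2.natDegree < m := by
        rcases eq_or_ne P2 0 with rfl | h
        · exact Or.inl rfl
        · right
          rcases lt_or_eq_of_le hd2 with h' | h'
          · exact h'
          · exfalso
            apply h
            apply Polynomial.leadingCoeff_eq_zero.1
            rw [Polynomial.leadingCoeff, h', hP2c]
      have st3 : P3 = 0 ∨ P3.natDegree < m := by
        rcases eq_or_ne P3 0 with rfl | h
        · exact Or.inl rfl
        · right
          rcases lt_or_eq_of_le hd3 with h' | h'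
          · exact h'
          · exfalso
            apply h
            apply Polynomial.leadingCoeff_eq_zero.1
            rw [Polynomial.leadingCoeff, h', hP3c]
      rcases st2 with h2z | h2lt
      · rcases st3 with h3z | h3lt
        · exact hz ⟨h2z, h3z⟩
        · have : P2.natDegree = 0 := by rw [h2z]; simp
          omega
      · rcases st3 with h3z | h3lt
        · have : P3.natDegree = 0 := by rw [h3z]; simp
          omega
        · omega

/-- the substitution x₁ ↦ a, x₂ ↦ b, x₃ ↦ a²b, ν ↦ 0 -/
def gm : EVar → R2 := Sum.elim
  ![Polynomial.C Polynomial.X, Polynomial.X, Polynomial.C (Polynomial.X ^ 2) * Polynomial.X]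
  (fun _ => 0)

def Φ : EPoly →ₐ[ℝ] R2 := MvPolynomial.aeval gm

lemma Φ_liftX (p : MvPolynomial (Fin 3) ℝ) :
    Φ (eliftX p) = MvPolynomial.aeval (fun i => gm (Sum.inl i)) p := by
  simp [Φ, eliftX, MvPolynomial.aeval_rename, Function.comp_def]

lemma gm_inl0 : gm (Sum.inl 0) = Polynomial.C Polynomial.X := rfl
lemma gm_inl1 : gm (Sum.inl 1) = Polynomial.X := rfl
lemma gm_inl2 : gm (Sum.inl 2) = Polynomial.C (Polynomial.X ^ 2) * Polynomial.X := rfl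

lemma Φ_h0 : Φ (eliftX (eh 0)) = Polynomial.C (1 - Polynomial.X ^ 2) := by
  rw [Φ_liftX]
  simp only [eh, Matrix.cons_val_zero, map_sub, map_one, map_pow, MvPolynomial.aeval_X]
  rfl

lemma Φ_h1 : Φ (eliftX (eh 1)) = Polynomial.X := by
  rw [Φ_liftX]
  simp only [eh, Matrix.cons_val_one, Matrix.cons_val_zero, Matrix.head_cons, MvPolynomial.aeval_X]
  exact gm_inl1

lemma Φ_h2 : Φ (eliftX (eh 2)) =
    Polynomial.C (Polynomial.X ^ 2 - 1) * Polynomial.X - 1 := by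
  rw [Φ_liftX]
  simp only [eh, Matrix.cons_val_two, Matrix.tail_cons, Matrix.head_cons, map_sub, map_one,
    MvPolynomial.aeval_X]
  rw [gm_inl2, gm_inl1]
  ring

lemma Φ_f (ε : ℝ) : Φ (eliftX (ef ε)) = Polynomial.C (Polynomial.C (ε - 1)) := by
  rw [Φ_liftX]
  simp only [ef, map_add, map_sub, map_pow, map_mul, map_one, MvPolynomial.aeval_X,
    MvPolynomial.aeval_C]
  rw [gm_inl0, gm_inl1, gm_inl2]
  have : (Polynomial.C Polynomial.X : R2) ^ 2 = Polynomial.C (Polynomial.X ^ 2) := by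
    rw [map_pow]
  rw [this, show (algebraMap ℝ R2) ε = Polynomial.C (Polynomial.C ε) from rfl]
  ring

lemma Φ_enu (j : Fin 3) : Φ (enu j) = 0 := by
  simp [Φ, enu, gm]

lemma Φ_u : Φ (eliftX (X 2 - X 0 ^ 2 * X 1)) = 0 := by
  rw [Φ_liftX]
  simp only [map_sub, map_mul, map_pow, MvPolynomial.aeval_X]
  rw [gm_inl0, gm_inl1, gm_inl2, map_pow]
  ring

lemma Φ_F (ε : ℝ) (k : Fin 3) : Φ (eF ε k) = 0 := by
  simp only [eF, map_sub, map_sum, map_mul, Φ_enu, zero_mul, Finset.sum_const_zero, sub_zero]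
  have hd : pderiv k (ef ε) =
      2 * (X 2 - X 0 ^ 2 * X 1) * pderiv k (X 2 - X 0 ^ 2 * X 1) := by
    have hef : ef ε = (X 2 - X 0 ^ 2 * X 1) ^ 2 - 1 + C ε := rfl
    rw [hef, map_add, map_sub, pderiv_one, pderiv_C, pderiv_pow]
    push_cast
    ring
  rw [hd]
  have hsplit : eliftX (2 * (X 2 - X 0 ^ 2 * X 1) * pderiv k (X 2 - X 0 ^ 2 * X 1))
      = eliftX 2 * eliftX (X 2 - X 0 ^ 2 * X 1)
        * eliftX (pderiv k (X 2 - X 0 ^ 2 * X 1)) := by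
    simp [eliftX, map_mul]
  rw [hsplit, map_mul, map_mul, Φ_u, mul_zero, zero_mul]

lemma Φ_ideal (ε : ℝ) (q : EPoly) (hq : q ∈ eI ε) : Φ q = 0 := by
  have hker : eI ε ≤ RingHom.ker (Φ : EPoly →+* R2) := by
    rw [eI, Ideal.span_le]
    rintro p (⟨k, rfl⟩ | ⟨j, rfl⟩)
    · exact Φ_F ε k
    · show Φ _ = 0
      simp [map_mul, Φ_enu]
  exact hker hq

lemma Nn_of_SOS (σp : EPoly) (h : IsSOS σp) : Nn (Φ σp) := by
  obtain ⟨m, q, rfl⟩ := h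
  intro x y
  rw [map_sum, map_sum]
  apply Finset.sum_nonneg
  intro i _
  rw [map_pow, map_pow]
  exact sq_nonneg _


end S9

/-- For `0 < ε < 1` and `f = (x_3 − x_1² x_2)² − 1 + ε`, with the
constraints `h_1 = 1 − x_1² ≥ 0`, `h_2 = x_2 ≥ 0`, `h_3 = x_3 − x_2 − 1 ≥ 0`, the
polynomial `f` does not belong to the linear cone `M_KKT`: there exist no SOS
`σ_0, …, σ_3` and no element `q` of `I_KKT` with `f = σ_0 + Σ_j σ_j h_j + q`. -/
theorem stmt9 (ε : ℝ) (hε0 : 0 < ε) (hε1 : ε < 1) :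
    eliftX (ef ε) ∉ eM ε := by
  rintro ⟨σ0, σ, hs0, hsj, q, hq, heq⟩
  have h := congrArg S9.Φ heq
  rw [S9.Φ_f, map_add, map_add, map_sum, S9.Φ_ideal ε q hq, add_zero] at h
  rw [Fin.sum_univ_three] at h
  rw [map_mul, map_mul, map_mul, S9.Φ_h0, S9.Φ_h1, S9.Φ_h2] at h
  exact S9.key (ε - 1) (by linarith) (S9.Φ σ0) (S9.Φ (σ 0)) (S9.Φ (σ 1)) (S9.Φ (σ 2))
    (S9.Nn_of_SOS _ hs0) (S9.Nn_of_SOS _ (hsj 0)) (S9.Nn_of_SOS _ (hsj 1))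
    (S9.Nn_of_SOS _ (hsj 2)) (by linear_combination -h)

end
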